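/- Uniform limits preserve weak monotonicity: let V and U be metric spaces with V locally compact, f : V → U a uniform limit of homeomorphisms fₙ : V → U, and u : U → ℝ a continuous monotone function (i.e., for every open set Ω compactly contained in the domain, sup_Ω u ≤ sup_{∂Ω} u < ∞ and inf_Ω u ≥ inf_{∂Ω} u > −∞). Then v := u ∘ f is monotone: for every open Ω compactly contained in V, sup_{x∈Ω} v(x) = sup_{x∈∂Ω} v(x) and inf_{x∈Ω} v(x) = inf_{x∈∂Ω} v(x). -/

import Mathlib

open Set Filter

/-- `u` is monotone: on every open set compactly contained in the space (with nonempty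
boundary), the values of `u` are controlled by its boundary values. -/
def IsMonotoneFn {X : Type*} [TopologicalSpace X] (u : X → ℝ) : Prop :=
  ∀ Ω : Set X, IsOpen Ω → IsCompact (closure Ω) → Ω.Nonempty → (frontier Ω).Nonempty →
    ∀ x ∈ Ω, u x ≤ sSup (u '' frontier Ω) ∧ sInf (u '' frontier Ω) ≤ u x

section Aux

variable {V U : Type*} [MetricSpace V] [MetricSpace U]

lemma dist_aux {fn : ℕ → V ≃ₜ U} {f : V → U}
    (hconv : TendstoUniformly (fun n x => fn n x) f atTop)
    (hf : Continuous f) {x : ℕ → V} {y : V} {φ : ℕ → ℕ} (hφ : StrictMono φ)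
    (hxy : Tendsto (x ∘ φ) atTop (nhds y)) :
    Tendsto (fun k => fn (φ k) (x (φ k))) atTop (nhds (f y)) := by
  have hfx : Tendsto (fun k => f (x (φ k))) atTop (nhds (f y)) :=
    (hf.tendsto y).comp hxy
  refine hfx.congr_dist ?_
  rw [Metric.tendstoUniformly_iff] at hconv
  rw [Metric.tendsto_atTop]
  intro ε hε
  have h1 := (hφ.tendsto_atTop.eventually (hconv ε hε)).exists_forall_of_atTop
  obtain ⟨N, hN⟩ := h1
  refine ⟨N, fun k hk => ?_⟩
  have := hN k hk (x (φ k))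
  rw [Real.dist_eq, sub_zero, abs_of_nonneg dist_nonneg]
  exact this

lemma aux_sup {fn : ℕ → V ≃ₜ U} {f : V → U}
    (hconv : TendstoUniformly (fun n x => fn n x) f atTop)
    (u : U → ℝ) (hu : Continuous u) {Ω : Set V}
    (hC : IsCompact (frontier Ω)) (hCne : (frontier Ω).Nonempty)
    (hb : ∀ n, ∀ x ∈ Ω, u (fn n x) ≤ sSup ((fun z => u (fn n z)) '' frontier Ω)) :
    ∀ x ∈ Ω, u (f x) ≤ sSup ((u ∘ f) '' frontier Ω) := by
  intro x hx
  have hf : Continuous f := hconv.continuous (Eventually.of_forall fun n => (fn n).continuous).frequently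
  choose xm hxmC hxmax using fun n =>
    hC.exists_sSup_image_eq hCne ((hu.comp (fn n).continuous).continuousOn)
  obtain ⟨y, hyC, φ, hφ, hxy⟩ := hC.tendsto_subseq hxmC
  have h1 : Tendsto (fun k => u (fn (φ k) x)) atTop (nhds (u (f x))) :=
    (hu.tendsto _).comp ((hconv.tendsto_at x).comp hφ.tendsto_atTop)
  have h2 : Tendsto (fun k => u (fn (φ k) (xm (φ k)))) atTop (nhds (u (f y))) :=
    (hu.tendsto _).comp (dist_aux hconv hf hφ hxy)
  have hle : u (f x) ≤ u (f y) := by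
    refine le_of_tendsto_of_tendsto' h1 h2 fun k => ?_
    have := hb (φ k) x hx
    exact this.trans (hxmax (φ k)).le
  refine hle.trans (le_csSup ?_ ⟨y, hyC, rfl⟩)
  exact hC.bddAbove_image ((hu.comp hf).continuousOn)

lemma aux_inf {fn : ℕ → V ≃ₜ U} {f : V → U}
    (hconv : TendstoUniformly (fun n x => fn n x) f atTop)
    (u : U → ℝ) (hu : Continuous u) {Ω : Set V}
    (hC : IsCompact (frontier Ω)) (hCne : (frontier Ω).Nonempty)
    (hb : ∀ n, ∀ x ∈ Ω, sInf ((fun z => u (fn n z)) '' frontier Ω) ≤ u (fn n x)) :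
    ∀ x ∈ Ω, sInf ((u ∘ f) '' frontier Ω) ≤ u (f x) := by
  intro x hx
  have hf : Continuous f := hconv.continuous (Eventually.of_forall fun n => (fn n).continuous).frequently
  choose xm hxmC hxmin using fun n =>
    hC.exists_sInf_image_eq hCne ((hu.comp (fn n).continuous).continuousOn)
  obtain ⟨y, hyC, φ, hφ, hxy⟩ := hC.tendsto_subseq hxmC
  have h1 : Tendsto (fun k => u (fn (φ k) x)) atTop (nhds (u (f x))) :=
    (hu.tendsto _).comp ((hconv.tendsto_at x).comp hφ.tendsto_atTop)
  have h2 : Tendsto (fun k => u (fn (φ k) (xm (φ k)))) atTop (nhds (u (f y))) :=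
    (hu.tendsto _).comp (dist_aux hconv hf hφ hxy)
  have hle : u (f y) ≤ u (f x) := by
    refine le_of_tendsto_of_tendsto' h2 h1 fun k => ?_
    have := hb (φ k) x hx
    exact ((hxmin (φ k)).symm.le).trans this
  refine le_trans (csInf_le ?_ ⟨y, hyC, rfl⟩) hle
  exact hC.bddBelow_image ((hu.comp hf).continuousOn)

end Aux

/-- Uniform limits of homeomorphisms preserve monotonicity: if `f` is a uniform limit
of homeomorphisms `fₙ : V → U` and `u : U → ℝ` is continuous and monotone, then
`v = u ∘ f` is monotone. -/
theorem monotone_of_uniform_limit {V U : Type*} [MetricSpace V] [MetricSpace U]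
    [LocallyCompactSpace V] (fn : ℕ → V ≃ₜ U) (f : V → U)
    (hconv : TendstoUniformly (fun n x => fn n x) f atTop)
    (u : U → ℝ) (hu : Continuous u) (hmono : IsMonotoneFn u) :
    ∀ Ω : Set V, IsOpen Ω → IsCompact (closure Ω) → Ω.Nonempty → (frontier Ω).Nonempty →
      sSup ((u ∘ f) '' Ω) = sSup ((u ∘ f) '' frontier Ω) ∧
      sInf ((u ∘ f) '' Ω) = sInf ((u ∘ f) '' frontier Ω) := by
  intro Ω hopen hK hne hfne
  have hf : Continuous f := hconv.continuous (Eventually.of_forall fun n => (fn n).continuous).frequently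
  have hC : IsCompact (frontier Ω) := hK.of_isClosed_subset isClosed_frontier frontier_subset_closure
  -- properties of the images fn n '' Ω
  have key : ∀ n, ∀ x ∈ Ω,
      u (fn n x) ≤ sSup ((fun z => u (fn n z)) '' frontier Ω) ∧
      sInf ((fun z => u (fn n z)) '' frontier Ω) ≤ u (fn n x) := by
    intro n x hx
    have hOn : IsOpen ((fn n) '' Ω) := (fn n).isOpenMap Ω hopen
    have hcl : closure ((fn n) '' Ω) = (fn n) '' closure Ω := ((fn n).image_closure Ω).symm
    have hKn : IsCompact (closure ((fn n) '' Ω)) := by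
      rw [hcl]; exact hK.image (fn n).continuous
    have hfr : frontier ((fn n) '' Ω) = (fn n) '' frontier Ω := ((fn n).image_frontier Ω).symm
    have hnen : ((fn n) '' Ω).Nonempty := hne.image _
    have hfnen : (frontier ((fn n) '' Ω)).Nonempty := by rw [hfr]; exact hfne.image _
    have := hmono ((fn n) '' Ω) hOn hKn hnen hfnen (fn n x) ⟨x, hx, rfl⟩
    rw [hfr, image_image] at this
    exact this
  have hsup := aux_sup hconv u hu hC hfne fun n x hx => (key n x hx).1
  have hinf := aux_inf hconv u hu hC hfne fun n x hx => (key n x hx).2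
  -- boundedness of (u ∘ f) '' Ω
  have hsub : (u ∘ f) '' Ω ⊆ (u ∘ f) '' closure Ω := image_mono subset_closure
  have hbA : BddAbove ((u ∘ f) '' Ω) :=
    (hK.bddAbove_image ((hu.comp hf).continuousOn)).mono hsub
  have hbA' : BddBelow ((u ∘ f) '' Ω) :=
    (hK.bddBelow_image ((hu.comp hf).continuousOn)).mono hsub
  have hneA : ((u ∘ f) '' Ω).Nonempty := hne.image _
  have hneB : ((u ∘ f) '' frontier Ω).Nonempty := hfne.image _
  have hbB : BddAbove ((u ∘ f) '' frontier Ω) := hC.bddAbove_image ((hu.comp hf).continuousOn)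
  have hbB' : BddBelow ((u ∘ f) '' frontier Ω) := hC.bddBelow_image ((hu.comp hf).continuousOn)
  -- frontier values are limits of interior values
  have hclosA : ∀ b ∈ (u ∘ f) '' frontier Ω, b ∈ closure ((u ∘ f) '' Ω) := by
    rintro b ⟨z, hz, rfl⟩
    have : (u ∘ f) z ∈ (u ∘ f) '' closure Ω := ⟨z, frontier_subset_closure hz, rfl⟩
    exact image_closure_subset_closure_image (hu.comp hf) this
  constructor
  · apply le_antisymm
    · exact csSup_le hneA (by rintro a ⟨x, hx, rfl⟩; exact hsup x hx)
    · refine csSup_le hneB fun b hb => ?_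
      have := hclosA b hb
      have hsubset : closure ((u ∘ f) '' Ω) ⊆ Iic (sSup ((u ∘ f) '' Ω)) :=
        closure_minimal (fun a ha => le_csSup hbA ha) isClosed_Iic
      exact hsubset this
  · apply le_antisymm
    · refine le_csInf hneB fun b hb => ?_
      have := hclosA b hb
      have hsubset : closure ((u ∘ f) '' Ω) ⊆ Ici (sInf ((u ∘ f) '' Ω)) :=
        closure_minimal (fun a ha => csInf_le hbA' ha) isClosed_Ici
      exact hsubset this
    · exact le_csInf hneA (by rintro a ⟨x, hx, rfl⟩; exact hinf x hx)
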